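/- Let p > 2, λ = n(p-2)+p, β = n(p-2)/λ, and 0 < β < 1 (which holds automatically). Let A = (β/λ · (1 - 2/p)^{p-1})^{1/(p-2)} and u(x,t) = A(|x|^p/(-t)^β)^{1/(p-2)} on Θ = {(x,t): |x| < (-t)^q, -1 < t < 0} with 0 < β < pq ≤ 1. Then ∂_t u - Δ_p u ≥ 0 pointwise in Θ ∩ {x ≠ 0}; specifically ∂_t u - Δ_p u = (A|x|^α/((p-2)(-t)^{β/(p-2)+1}))(β - A^{p-2} α^{p-1} λ (-t)^{1-β}) ≥ 0 where α = p/(p-2). -/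

import Mathlib

open Real Filter Set Topology

lemma hasFDerivAt_norm_rpow' {n : ℕ} (c : ℝ) {y : EuclideanSpace ℝ (Fin n)} (hy : y ≠ 0) :
    HasFDerivAt (fun z : EuclideanSpace ℝ (Fin n) => ‖z‖ ^ c)
      ((c * ‖y‖ ^ (c - 2)) • innerSL ℝ y) y := by
  have hy0 : (0:ℝ) < ‖y‖ := norm_pos_iff.mpr hy
  have hy2 : (0:ℝ) < ‖y‖ ^ 2 := by positivity
  have h1 : HasDerivAt (fun s : ℝ => s ^ (c/2)) ((c/2) * (‖y‖^2) ^ (c/2 - 1)) (‖y‖^2) :=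
    Real.hasDerivAt_rpow_const (Or.inl hy2.ne')
  have h2 : HasFDerivAt (fun z : EuclideanSpace ℝ (Fin n) => ‖z‖ ^ 2)
      (2 • innerSL ℝ y) y := (hasStrictFDerivAt_norm_sq y).hasFDerivAt
  have h3 := h1.comp_hasFDerivAt y h2
  have hfun : (fun z : EuclideanSpace ℝ (Fin n) => ((‖z‖^2 : ℝ)) ^ (c/2))
      = fun z : EuclideanSpace ℝ (Fin n) => ‖z‖ ^ c := by
    funext z
    rw [← Real.rpow_natCast ‖z‖ 2, ← Real.rpow_mul (norm_nonneg z)]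
    norm_num
    congr 1
    ring
  have hpow : ((‖y‖^2 : ℝ)) ^ (c/2 - 1) = ‖y‖ ^ (c - 2) := by
    rw [← Real.rpow_natCast ‖y‖ 2, ← Real.rpow_mul (norm_nonneg y)]
    norm_num
    ring_nf
  have h3' : HasFDerivAt (fun z : EuclideanSpace ℝ (Fin n) => ((‖z‖^2 : ℝ)) ^ (c/2))
      (((c/2) * (‖y‖^2) ^ (c/2 - 1)) • (2 • innerSL ℝ y)) y := h3
  rw [hfun, hpow] at h3'
  convert h3' using 1
  · rfl
  ext z
  simp [real_inner_smul_left]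
  ring

lemma hasGradientAt_norm_rpow' {n : ℕ} (a c : ℝ) {y : EuclideanSpace ℝ (Fin n)} (hy : y ≠ 0) :
    HasGradientAt (fun z : EuclideanSpace ℝ (Fin n) => a * ‖z‖ ^ c)
      ((a * c * ‖y‖ ^ (c - 2)) • y) y := by
  have h := (hasFDerivAt_norm_rpow' c hy).const_mul a
  apply hasGradientAt_iff_hasFDerivAt.mpr
  convert h using 1
  · rfl
  ext z
  simp [InnerProductSpace.toDual_apply_apply, real_inner_smul_left]
  ring


/-- The p-Laplacian `div(|∇u|^{p-2} ∇u)` computed via Fréchet derivatives. -/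
noncomputable def pLap (p : ℝ) {n : ℕ} (u : EuclideanSpace ℝ (Fin n) → ℝ)
    (x : EuclideanSpace ℝ (Fin n)) : ℝ :=
  ∑ i, (inner ℝ (fderiv ℝ (fun y => ‖gradient u y‖ ^ (p - 2) • gradient u y) x
      (EuclideanSpace.single i 1)) (EuclideanSpace.single i (1 : ℝ)) : ℝ)
/-- Degenerate case: with `λ = n(p-2)+p`, `α = p/(p-2)`, `0 < β < pq ≤ 1` and
`A = (β(1-2/p)^{p-1}/λ)^{1/(p-2)}`, the function `u(x,t) = A(|x|^p/(-t)^β)^{1/(p-2)}`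
satisfies `∂_t u - Δ_p u = (A|x|^α/((p-2)(-t)^{β/(p-2)+1}))(β - A^{p-2}α^{p-1}λ(-t)^{1-β}) ≥ 0`
in `Θ ∩ {x ≠ 0}`. -/
theorem small_barrier_supersolution (p q β : ℝ) (hp : 2 < p) (n : ℕ) (hn : 1 ≤ n)
    (lam α A : ℝ) (hlam : lam = n * (p - 2) + p) (hα : α = p / (p - 2))
    (hβ0 : 0 < β) (hβ : β < p * q) (hq : p * q ≤ 1)
    (hA : A = (β / lam * (1 - 2 / p) ^ (p - 1)) ^ (1 / (p - 2)))
    (Θ : Set (EuclideanSpace ℝ (Fin n) × ℝ))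
    (hΘ : Θ = {z : EuclideanSpace ℝ (Fin n) × ℝ |
      ‖z.1‖ < (-z.2) ^ q ∧ -1 < z.2 ∧ z.2 < 0})
    (u : EuclideanSpace ℝ (Fin n) → ℝ → ℝ)
    (hu : ∀ x t, u x t = A * (‖x‖ ^ p / (-t) ^ β) ^ (1 / (p - 2)))
    (x : EuclideanSpace ℝ (Fin n)) (t : ℝ) (hmem : (x, t) ∈ Θ) (hx : x ≠ 0) :
    deriv (u x) t - pLap p (fun y => u y t) x =
      A * ‖x‖ ^ α / ((p - 2) * (-t) ^ (β / (p - 2) + 1)) *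
        (β - A ^ (p - 2) * α ^ (p - 1) * lam * (-t) ^ (1 - β)) ∧
    deriv (u x) t - pLap p (fun y => u y t) x ≥ 0 := by
  rw [hΘ] at hmem
  obtain ⟨hxlt, ht1, ht0⟩ := hmem
  have hs0 : (0:ℝ) < -t := by linarith
  have hs1 : -t < 1 := by linarith
  have hp2 : (0:ℝ) < p - 2 := by linarith
  have hp0 : (0:ℝ) < p := by linarith
  have hR : (0:ℝ) < ‖x‖ := norm_pos_iff.mpr hx
  have hα0 : 0 < α := by rw [hα]; positivity
  have hn1 : (1:ℝ) ≤ (n:ℝ) := by exact_mod_cast hn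
  have hlam0 : 0 < lam := by rw [hlam]; nlinarith
  have h2p : (0:ℝ) < 1 - 2/p := by
    have : 2/p < 1 := (div_lt_one hp0).mpr (by linarith)
    linarith
  have hbase : 0 < β / lam * (1 - 2/p) ^ (p-1) :=
    mul_pos (div_pos hβ0 hlam0) (Real.rpow_pos_of_pos h2p _)
  have hA0 : 0 < A := by rw [hA]; exact Real.rpow_pos_of_pos hbase _
  have hAkey : A ^ (p-2) * α ^ (p-1) * lam = β := by
    have e1 : ((β / lam * (1 - 2/p) ^ (p-1)) ^ (1/(p-2))) ^ (p-2)
        = β / lam * (1 - 2/p) ^ (p-1) := by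
      rw [← Real.rpow_mul hbase.le, one_div, inv_mul_cancel₀ hp2.ne', Real.rpow_one]
    have e2 : (1 - 2/p) ^ (p-1) * α ^ (p-1) = 1 := by
      rw [← Real.mul_rpow h2p.le hα0.le]
      have e3 : (1 - 2/p) * α = 1 := by
        rw [hα]; field_simp
      rw [e3, Real.one_rpow]
    rw [hA, e1]
    calc β / lam * (1 - 2/p)^(p-1) * α^(p-1) * lam
        = β / lam * ((1-2/p)^(p-1) * α^(p-1)) * lam := by ring
      _ = β := by rw [e2]; field_simp
  -- key rewriting of u
  have key : ∀ R τ : ℝ, 0 ≤ R → τ < 0 →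
      A * (R ^ p / (-τ) ^ β) ^ (1/(p-2)) = A * R ^ α * (-τ) ^ (-(β/(p-2))) := by
    intro R τ hR0 hτ
    have hτ' : (0:ℝ) < -τ := by linarith
    rw [Real.div_rpow (Real.rpow_nonneg hR0 p) (Real.rpow_nonneg hτ'.le β),
        ← Real.rpow_mul hR0, ← Real.rpow_mul hτ'.le,
        div_eq_mul_inv, ← Real.rpow_neg hτ'.le,
        show p * (1/(p-2)) = α by rw [hα]; ring,
        show β * (1/(p-2)) = β/(p-2) by ring]
    ring
  -- time derivative
  have hud : HasDerivAt (fun τ : ℝ => A * ‖x‖ ^ α * (-τ) ^ (-(β/(p-2))))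
      (A * ‖x‖ ^ α * (-(β/(p-2)) * (-t) ^ (-(β/(p-2)) - 1) * (-1))) t := by
    have h1 : HasDerivAt (fun τ : ℝ => -τ) (-1) t := (hasDerivAt_id t).neg
    have h2 : HasDerivAt (fun s : ℝ => s ^ (-(β/(p-2))))
        (-(β/(p-2)) * (-t) ^ (-(β/(p-2)) - 1)) (-t) :=
      Real.hasDerivAt_rpow_const (Or.inl hs0.ne')
    simpa [Function.comp] using (h2.comp t h1).const_mul (A * ‖x‖ ^ α)
  have hEqt : u x =ᶠ[𝓝 t] fun τ => A * ‖x‖ ^ α * (-τ) ^ (-(β/(p-2))) := by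
    filter_upwards [Iio_mem_nhds ht0] with τ hτ
    rw [hu]
    exact key ‖x‖ τ (norm_nonneg x) hτ
  have hderiv : deriv (u x) t
      = A * ‖x‖ ^ α * (-(β/(p-2)) * (-t) ^ (-(β/(p-2)) - 1) * (-1)) := by
    rw [hEqt.deriv_eq]; exact hud.deriv
  -- space part
  set c1 : ℝ := A * (-t) ^ (-(β/(p-2))) with hc1def
  have hc1 : 0 < c1 := mul_pos hA0 (Real.rpow_pos_of_pos hs0 _)
  have hfy : (fun y => u y t) = fun y : EuclideanSpace ℝ (Fin n) => c1 * ‖y‖ ^ α := by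
    funext y
    rw [hu, key ‖y‖ t (norm_nonneg y) ht0, hc1def]
    ring
  have hgrad : ∀ z : EuclideanSpace ℝ (Fin n), z ≠ 0 →
      gradient (fun y => u y t) z = (c1 * α * ‖z‖ ^ (α - 2)) • z := by
    intro z hz
    rw [hfy]
    exact (hasGradientAt_norm_rpow' c1 α hz).gradient
  set c2 : ℝ := (c1 * α) ^ (p - 1) with hc2def
  have hc1α : 0 < c1 * α := mul_pos hc1 hα0
  have hVW : (fun z => ‖gradient (fun y => u y t) z‖ ^ (p-2) • gradient (fun y => u y t) z)
      =ᶠ[𝓝 x] (fun z : EuclideanSpace ℝ (Fin n) => (c2 * ‖z‖ ^ α) • z) := by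
    filter_upwards [IsOpen.mem_nhds isOpen_compl_singleton hx] with z hz
    have hz' : z ≠ 0 := hz
    have hz0 : (0:ℝ) < ‖z‖ := norm_pos_iff.mpr hz'
    rw [hgrad z hz']
    have hsc : 0 < c1 * α * ‖z‖ ^ (α - 2) := mul_pos hc1α (Real.rpow_pos_of_pos hz0 _)
    rw [norm_smul, Real.norm_eq_abs, abs_of_pos hsc, smul_smul]
    congr 1
    have e1 : ‖z‖ ^ (α - 2) * ‖z‖ = ‖z‖ ^ (α - 1) := by
      have h := Real.rpow_add hz0 (α-2) 1
      rw [Real.rpow_one] at h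
      rw [← h]
      congr 1
      ring
    have e4 : (c1*α)^(p-2) * (c1*α) = (c1*α)^(p-1) := by
      have h := Real.rpow_add hc1α (p-2) 1
      rw [Real.rpow_one] at h
      rw [← h]
      congr 1
      ring
    have e5 : ‖z‖^(2:ℝ) * ‖z‖^(α-2) = ‖z‖^α := by
      rw [← Real.rpow_add hz0]
      congr 1
      ring
    rw [mul_assoc (c1 * α), e1,
      Real.mul_rpow hc1α.le (Real.rpow_nonneg (norm_nonneg z) _),
      ← Real.rpow_mul (norm_nonneg z),
      show (α - 1) * (p - 2) = 2 by rw [hα]; field_simp; ring]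
    calc (c1*α)^(p-2) * ‖z‖^(2:ℝ) * (c1*α*‖z‖^(α-2))
        = ((c1*α)^(p-2) * (c1*α)) * (‖z‖^(2:ℝ) * ‖z‖^(α-2)) := by ring
      _ = c2 * ‖z‖^α := by rw [e4, e5, hc2def]
  have hW := ((hasFDerivAt_norm_rpow' α hx).const_mul c2).smul (hasFDerivAt_id x)
  have hfd : fderiv ℝ
      (fun z => ‖gradient (fun y => u y t) z‖ ^ (p-2) • gradient (fun y => u y t) z) x
      = (c2 * ‖x‖ ^ α) • ContinuousLinearMap.id ℝ (EuclideanSpace ℝ (Fin n))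
        + (c2 • ((α * ‖x‖ ^ (α - 2)) • innerSL ℝ x)).smulRight x := by
    rw [hVW.fderiv_eq]
    exact hW.fderiv
  have hsum : ∑ i, x i * x i = ‖x‖ ^ 2 := by
    have h := real_inner_self_eq_norm_sq x
    rw [PiLp.inner_apply] at h
    simpa [sq] using h
  have hterm : ∀ i : Fin n,
      (inner ℝ ((fderiv ℝ (fun z => ‖gradient (fun y => u y t) z‖ ^ (p-2)
          • gradient (fun y => u y t) z) x) (EuclideanSpace.single i 1))
        (EuclideanSpace.single i (1:ℝ)) : ℝ)
      = c2 * ‖x‖ ^ α + c2 * α * ‖x‖ ^ (α - 2) * (x i * x i) := by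
    intro i
    rw [hfd]
    simp [ContinuousLinearMap.smulRight_apply, real_inner_smul_left, inner_add_left,
      EuclideanSpace.inner_single_left, EuclideanSpace.inner_single_right,
      EuclideanSpace.single_apply, real_inner_comm]
    ring
  have e6 : ‖x‖ ^ (α-2) * ‖x‖ ^ (2:ℕ) = ‖x‖ ^ α := by
    rw [← Real.rpow_natCast ‖x‖ 2, ← Real.rpow_add hR]
    congr 1
    push_cast
    ring
  have hplap : pLap p (fun y => u y t) x = c2 * ((n:ℝ) + α) * ‖x‖ ^ α := by
    unfold pLap
    rw [Finset.sum_congr rfl (fun i _ => hterm i)]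
    rw [Finset.sum_add_distrib, Finset.sum_const, Finset.card_univ, Fintype.card_fin,
      ← Finset.mul_sum, hsum, nsmul_eq_mul]
    linear_combination (c2 * α) * e6
  -- final assembly
  have hsγ : (0:ℝ) < (-t) ^ (β/(p-2)+1) := Real.rpow_pos_of_pos hs0 _
  have E1 : A * ‖x‖^α * (-(β/(p-2)) * (-t)^(-(β/(p-2)) - 1) * (-1))
      = A * ‖x‖ ^ α / ((p-2) * (-t) ^ (β/(p-2)+1)) * β := by
    have h1 : (-t) ^ (-(β/(p-2)) - 1) = ((-t)^(β/(p-2)+1))⁻¹ := by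
      rw [← Real.rpow_neg hs0.le]
      congr 1
      ring
    rw [h1]
    field_simp
  have hc2eq : c2 = A^(p-1) * α^(p-1) * (-t) ^ (-(β/(p-2))*(p-1)) := by
    rw [hc2def, hc1def,
      Real.mul_rpow (mul_pos hA0 (Real.rpow_pos_of_pos hs0 _)).le hα0.le,
      Real.mul_rpow hA0.le (Real.rpow_pos_of_pos hs0 _).le,
      ← Real.rpow_mul hs0.le]
    ring
  have E2 : c2 * ((n:ℝ) + α) * ‖x‖^α
      = A * ‖x‖ ^ α / ((p-2) * (-t) ^ (β/(p-2)+1))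
        * (A^(p-2) * α^(p-1) * lam * (-t)^(1-β)) := by
    rw [hc2eq]
    have h1 : A^(p-1) = A * A^(p-2) := by
      rw [show p-1 = 1+(p-2) by ring, Real.rpow_add hA0, Real.rpow_one]
    have h2 : (-t)^(1-β) = (-t)^(-(β/(p-2))*(p-1)) * (-t)^(β/(p-2)+1) := by
      rw [← Real.rpow_add hs0]
      congr 1
      field_simp
      ring
    have h3 : ((n:ℝ) + α) * (p-2) = lam := by
      rw [hα, hlam]
      field_simp
    rw [h1, h2, ← h3]
    field_simp
  have heq : deriv (u x) t - pLap p (fun y => u y t) x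
      = A * ‖x‖ ^ α / ((p - 2) * (-t) ^ (β / (p - 2) + 1)) *
        (β - A ^ (p - 2) * α ^ (p - 1) * lam * (-t) ^ (1 - β)) := by
    rw [hderiv, hplap, mul_sub, E1, E2]
  refine ⟨heq, ?_⟩
  rw [heq]
  apply mul_nonneg
  · exact div_nonneg (mul_nonneg hA0.le (Real.rpow_nonneg (norm_nonneg x) _))
      (mul_pos hp2 hsγ).le
  · rw [hAkey]
    have h1 : (-t)^(1-β) ≤ 1 :=
      Real.rpow_le_one hs0.le hs1.le (by linarith)
    have h2 : β * (-t)^(1-β) ≤ β * 1 := mul_le_mul_of_nonneg_left h1 hβ0.le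
    linarith
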